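/- If G is an Eulerian graph (connected with all vertex degrees even) and |E(G)| is odd, then G has no interval edge coloring. -/

import Mathlib

/-- The set of colors appearing on edges incident to `v` under edge coloring `c`. -/
def colorsAt {V : Type*} (G : SimpleGraph V) (c : Sym2 V → ℕ) (v : V) : Set ℕ :=
  {i | ∃ e ∈ G.edgeSet, v ∈ e ∧ c e = i}

/-- A set of naturals is an interval of consecutive integers. -/
def IsIntervalSet (S : Set ℕ) : Prop :=
  ∀ i j k, i ∈ S → j ∈ S → i ≤ k → k ≤ j → k ∈ S

/-- `c` is a proper edge coloring of `G`: distinct edges sharing a vertex get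
different colors. -/
def IsProperEdgeColoring {V : Type*} (G : SimpleGraph V) (c : Sym2 V → ℕ) : Prop :=
  ∀ e₁ ∈ G.edgeSet, ∀ e₂ ∈ G.edgeSet, e₁ ≠ e₂ → (∃ v, v ∈ e₁ ∧ v ∈ e₂) → c e₁ ≠ c e₂

/-- An interval `t`-coloring: proper edge coloring with colors `1,…,t`, every color
used, and the colors at each vertex forming an interval of consecutive integers. -/
def IsIntervalColoring {V : Type*} (G : SimpleGraph V) (t : ℕ) (c : Sym2 V → ℕ) : Prop :=
  IsProperEdgeColoring G c ∧
  (∀ e ∈ G.edgeSet, c e ∈ Set.Icc 1 t) ∧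
  (∀ i ∈ Set.Icc 1 t, ∃ e ∈ G.edgeSet, c e = i) ∧
  (∀ v, IsIntervalSet (colorsAt G c v))

/-- A cyclic interval `t`-coloring: proper edge coloring with colors `1,…,t`, every
color used, and for each vertex the set of colors at it, or its complement in
`{1,…,t}`, is an interval of consecutive integers. -/
def IsCyclicIntervalColoring {V : Type*} (G : SimpleGraph V) (t : ℕ) (c : Sym2 V → ℕ) : Prop :=
  IsProperEdgeColoring G c ∧
  (∀ e ∈ G.edgeSet, c e ∈ Set.Icc 1 t) ∧
  (∀ i ∈ Set.Icc 1 t, ∃ e ∈ G.edgeSet, c e = i) ∧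
  (∀ v, IsIntervalSet (colorsAt G c v) ∨ IsIntervalSet (Set.Icc 1 t \ colorsAt G c v))


lemma oddPair (m : ℕ) : ((Finset.Ico m (m + 2)).filter (fun n => Odd n)).card = 1 := by
  have h : Finset.Ico m (m + 2) = {m, m + 1} := by
    ext x; simp only [Finset.mem_Ico, Finset.mem_insert, Finset.mem_singleton]; omega
  rw [Finset.card_filter, h, Finset.sum_pair (by omega : m ≠ m + 1)]
  rcases Nat.even_or_odd m with hm | hm
  · rw [if_neg (Nat.not_odd_iff_even.mpr hm), if_pos hm.add_one]
  · rw [if_pos hm, if_neg (Nat.not_odd_iff_even.mpr hm.add_one)]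

lemma oddIco (a k : ℕ) : ((Finset.Ico a (a + 2 * k)).filter (fun n => Odd n)).card = k := by
  induction k with
  | zero => simp
  | succ k ih =>
    rw [show a + 2 * (k + 1) = a + 2 * k + 2 from by ring,
      ← Finset.Ico_union_Ico_eq_Ico (show a ≤ a + 2 * k by omega)
        (show a + 2 * k ≤ a + 2 * k + 2 by omega), Finset.filter_union, Finset.card_union_of_disjoint, ih, oddPair]
    apply Finset.disjoint_filter_filter
    exact Finset.Ico_disjoint_Ico_consecutive a (a + 2 * k) (a + 2 * k + 2)

lemma interval_finset {s : Finset ℕ} (hne : s.Nonempty) (h : IsIntervalSet ↑s) :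
    s = Finset.Icc (s.min' hne) (s.max' hne) := by
  ext k
  simp only [Finset.mem_Icc]
  constructor
  · intro hk; exact ⟨s.min'_le k hk, s.le_max' k hk⟩
  · rintro ⟨h1, h2⟩
    exact h _ _ k (s.min'_mem hne) (s.max'_mem hne) h1 h2

lemma doubleCount {V : Type*} [Fintype V] [DecidableEq V] (G : SimpleGraph V)
    [DecidableRel G.Adj] (P : Sym2 V → Prop) [DecidablePred P] :
    ∑ v : V, (G.edgeFinset.filter (fun e => v ∈ e ∧ P e)).card =
      2 * (G.edgeFinset.filter P).card := by
  simp only [Finset.card_filter]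
  rw [Finset.sum_comm, Finset.mul_sum]
  apply Finset.sum_congr rfl
  intro e he
  have hne : ¬ e.IsDiag := G.not_isDiag_of_mem_edgeSet (SimpleGraph.mem_edgeFinset.mp he)
  induction e with
  | _ x y =>
    have hxy : x ≠ y := by simpa [Sym2.mk_isDiag_iff] using hne
    by_cases hP : P s(x, y)
    · have : ∀ v : V, (if v ∈ s(x, y) ∧ P s(x, y) then 1 else 0) =
          (if v = x ∨ v = y then 1 else 0) := by
        intro v; simp [Sym2.mem_iff, hP]
      simp only [this]
      rw [← Finset.card_filter]
      have : Finset.univ.filter (fun v : V => v = x ∨ v = y) = {x, y} := by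
        ext v; simp
      rw [this, Finset.card_pair hxy, if_pos hP]
      omega
    · simp [hP]

/-- If `G` is Eulerian (connected with all degrees even) and has an odd number of
edges, then `G` has no interval edge coloring. -/
theorem stmt1 {V : Type*} [Fintype V] [DecidableEq V] (G : SimpleGraph V)
    [DecidableRel G.Adj]
    (hconn : G.Connected) (heven : ∀ v : V, Even (G.degree v))
    (hodd : Odd G.edgeFinset.card) :
    ¬ ∃ (t : ℕ) (c : Sym2 V → ℕ), IsIntervalColoring G t c := by
  rintro ⟨t, c, hprop, hrange, hall, hint⟩
  classical
  have key : ∀ v : V, (G.edgeFinset.filter (fun e => v ∈ e ∧ Odd (c e))).card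
      = G.degree v / 2 := by
    intro v
    set A : Finset (Sym2 V) := G.edgeFinset.filter (fun e => v ∈ e) with hA
    have hAcard : A.card = G.degree v := by
      rw [hA, ← SimpleGraph.incidenceFinset_eq_filter,
        SimpleGraph.card_incidenceFinset_eq_degree]
    have hinj : Set.InjOn c ↑A := by
      intro e₁ h1 e₂ h2 hc
      by_contra hne
      simp only [Finset.mem_coe, hA, Finset.mem_filter,
        SimpleGraph.mem_edgeFinset] at h1 h2
      exact hprop e₁ h1.1 e₂ h2.1 hne ⟨v, h1.2, h2.2⟩ hc
    set s : Finset ℕ := A.image c with hs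
    have hscard : s.card = G.degree v := by
      rw [hs, Finset.card_image_of_injOn hinj, hAcard]
    have hset : (↑s : Set ℕ) = colorsAt G c v := by
      ext i
      simp only [hs, Finset.coe_image, Set.mem_image, Finset.mem_coe, hA,
        Finset.mem_filter, SimpleGraph.mem_edgeFinset, colorsAt, Set.mem_setOf_eq]
      constructor
      · rintro ⟨e, ⟨he, hv⟩, rfl⟩; exact ⟨e, he, hv, rfl⟩
      · rintro ⟨e, he, hv, rfl⟩; exact ⟨e, ⟨he, hv⟩, rfl⟩
    have hfilter : G.edgeFinset.filter (fun e => v ∈ e ∧ Odd (c e))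
        = A.filter (fun e => Odd (c e)) := by
      rw [hA, Finset.filter_filter]
    obtain ⟨k, hk⟩ := heven v
    by_cases hd : G.degree v = 0
    · have hAe : A = ∅ := Finset.card_eq_zero.mp (hAcard.trans hd)
      rw [hfilter, hAe, hd]
      simp
    · have hne : s.Nonempty := by
        rw [← Finset.card_pos, hscard]; omega
      have hintS : IsIntervalSet ↑s := hset ▸ hint v
      have hIcc := interval_finset hne hintS
      set a := s.min' hne with ha
      set b := s.max' hne with hb0
      have hab : a ≤ b := s.min'_le b (s.max'_mem hne)
      have hcard2 : b + 1 - a = G.degree v := by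
        rw [← hscard]; conv_rhs => rw [hIcc]
        rw [Nat.card_Icc]
      have hIco : s = Finset.Ico a (a + 2 * k) := by
        rw [hIcc, ← Finset.Ico_add_one_right_eq_Icc, show b + 1 = a + 2 * k from by omega]
      have hcount : (s.filter (fun n => Odd n)).card = k := by
        rw [hIco]; exact oddIco a k
      have himg : (A.filter (fun e => Odd (c e))).image c
          = s.filter (fun n => Odd n) := by
        rw [hs]
        exact (Finset.filter_image).symm
      have hcf : (A.filter (fun e => Odd (c e))).card = k := by
        rw [← hcount, ← himg]
        exact (Finset.card_image_of_injOn
          (hinj.mono (by exact_mod_cast Finset.filter_subset _ A))).symm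
      rw [hfilter, hcf]
      omega
  have hsum : ∑ v : V, (G.edgeFinset.filter (fun e => v ∈ e ∧ Odd (c e))).card
      = ∑ v : V, G.degree v / 2 := Finset.sum_congr rfl fun v _ => key v
  rw [doubleCount] at hsum
  have h2 : 2 * ∑ v : V, G.degree v / 2 = ∑ v : V, G.degree v := by
    rw [Finset.mul_sum]
    refine Finset.sum_congr rfl fun v _ => ?_
    obtain ⟨k, hk⟩ := heven v
    omega
  have hdeg := SimpleGraph.sum_degrees_eq_twice_card_edges G
  obtain ⟨m, hm⟩ := hodd
  omega
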